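/- Let k ∈ ℝ⁴ be a nonzero null vector of Minkowski space (k ≠ 0 and η(k,k) = 0). Then the set {F ∈ so(1,3) : F·k ∈ ℝ·k}, consisting of those skew-adjoint matrices mapping k into its own span, is a linear subspace of so(1,3) of dimension 4. -/

import Mathlib

open Matrix

attribute [local instance 100] LieRing.ofAssociativeRing

/-- The Minkowski bilinear form on `ℝ⁴` with signature `(-,+,+,+)`. -/
def eta (v w : Fin 4 → ℝ) : ℝ :=
  -(v 0 * w 0) + v 1 * w 1 + v 2 * w 2 + v 3 * w 3

/-- The matrix `diag(-1,1,1,1)` of the Minkowski form. -/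
def eta13 : Matrix (Fin 4) (Fin 4) ℝ :=
  Matrix.diagonal ![(-1 : ℝ), 1, 1, 1]

/-- The Lie algebra `so(1,3)` of matrices `A` with `Aᵀη + ηA = 0`. -/
def so13 : LieSubalgebra ℝ (Matrix (Fin 4) (Fin 4) ℝ) :=
  skewAdjointMatricesLieSubalgebra eta13

lemma mem_so13_iff (A : Matrix (Fin 4) (Fin 4) ℝ) :
    A ∈ so13 ↔ ∀ i j, A j i * (![(-1:ℝ),1,1,1] j) = -((![(-1:ℝ),1,1,1] i) * A i j) := by
  rw [so13, mem_skewAdjointMatricesLieSubalgebra, mem_skewAdjointMatricesSubmodule]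
  unfold Matrix.IsSkewAdjoint Matrix.IsAdjointPair
  constructor
  · intro h i j
    have := congrFun (congrFun h i) j
    simpa [eta13, Matrix.mul_diagonal, Matrix.diagonal_mul, Matrix.transpose_apply] using this
  · intro h
    ext i j
    have := h i j
    simpa [eta13, Matrix.mul_diagonal, Matrix.diagonal_mul, Matrix.transpose_apply] using this

lemma mem_so13_iff' (A : Matrix (Fin 4) (Fin 4) ℝ) :
    A ∈ so13 ↔ A 0 0 = 0 ∧ A 1 1 = 0 ∧ A 2 2 = 0 ∧ A 3 3 = 0 ∧
      A 1 0 = A 0 1 ∧ A 2 0 = A 0 2 ∧ A 3 0 = A 0 3 ∧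
      A 2 1 = -A 1 2 ∧ A 3 1 = -A 1 3 ∧ A 3 2 = -A 2 3 := by
  rw [mem_so13_iff]
  constructor
  · intro h
    have h00 := h 0 0; have h01 := h 0 1; have h02 := h 0 2; have h03 := h 0 3
    have h11 := h 1 1; have h12 := h 1 2; have h13 := h 1 3
    have h22 := h 2 2; have h23 := h 2 3; have h33 := h 3 3
    norm_num [Matrix.cons_val_two, Matrix.cons_val_three, Matrix.vecHead, Matrix.vecTail] at h00 h01 h02 h03 h11 h12 h13 h22 h23 h33
    refine ⟨by linarith, by linarith, by linarith, by linarith, by linarith,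
      by linarith, by linarith, by linarith, by linarith, by linarith⟩
  · rintro ⟨h1,h2,h3,h4,h5,h6,h7,h8,h9,h10⟩ i j
    fin_cases i <;> fin_cases j <;> simp <;> linarith

def B : Fin 6 → Matrix (Fin 4) (Fin 4) ℝ :=
  ![ !![0,1,0,0; 1,0,0,0; 0,0,0,0; 0,0,0,0],
     !![0,0,1,0; 0,0,0,0; 1,0,0,0; 0,0,0,0],
     !![0,0,0,1; 0,0,0,0; 0,0,0,0; 1,0,0,0],
     !![0,0,0,0; 0,0,1,0; 0,-1,0,0; 0,0,0,0],
     !![0,0,0,0; 0,0,0,1; 0,0,0,0; 0,-1,0,0],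
     !![0,0,0,0; 0,0,0,0; 0,0,0,1; 0,0,-1,0] ]

lemma B0 : B 0 = !![0,1,0,0; 1,0,0,0; 0,0,0,0; 0,0,0,0] := rfl
lemma B1 : B 1 = !![0,0,1,0; 0,0,0,0; 1,0,0,0; 0,0,0,0] := rfl
lemma B2 : B 2 = !![0,0,0,1; 0,0,0,0; 0,0,0,0; 1,0,0,0] := rfl
lemma B3 : B 3 = !![0,0,0,0; 0,0,1,0; 0,-1,0,0; 0,0,0,0] := rfl
lemma B4 : B 4 = !![0,0,0,0; 0,0,0,1; 0,0,0,0; 0,-1,0,0] := rfl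
lemma B5 : B 5 = !![0,0,0,0; 0,0,0,0; 0,0,0,1; 0,0,-1,0] := rfl

lemma B_mem (i : Fin 6) : B i ∈ so13 := by
  fin_cases i <;> rw [mem_so13_iff'] <;> norm_num [B0, B1, B2, B3, B4, B5, B, Matrix.cons_val_two, Matrix.cons_val_three, Matrix.vecHead, Matrix.vecTail]

set_option maxHeartbeats 2000000 in
lemma so13_eq_span : (so13.toSubmodule : Submodule ℝ (Matrix (Fin 4) (Fin 4) ℝ)) =
    Submodule.span ℝ (Set.range B) := by
  apply le_antisymm
  · intro F hF
    rw [LieSubalgebra.mem_toSubmodule, mem_so13_iff'] at hF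
    obtain ⟨h1,h2,h3,h4,h5,h6,h7,h8,h9,h10⟩ := hF
    have hrep : F = F 0 1 • B 0 + F 0 2 • B 1 + F 0 3 • B 2
        + F 1 2 • B 3 + F 1 3 • B 4 + F 2 3 • B 5 := by
      ext i j
      fin_cases i <;> fin_cases j <;>
        simp [B0, B1, B2, B3, B4, B5, Matrix.vecHead, Matrix.vecTail, Matrix.add_apply, Matrix.smul_apply] <;> linarith
    rw [hrep]
    have h : ∀ i : Fin 6, B i ∈ Submodule.span ℝ (Set.range B) := fun i =>
      Submodule.subset_span (Set.mem_range_self i)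
    exact add_mem (add_mem (add_mem (add_mem (add_mem
      (Submodule.smul_mem _ _ (h 0)) (Submodule.smul_mem _ _ (h 1)))
      (Submodule.smul_mem _ _ (h 2))) (Submodule.smul_mem _ _ (h 3)))
      (Submodule.smul_mem _ _ (h 4))) (Submodule.smul_mem _ _ (h 5))
  · rw [Submodule.span_le]
    rintro _ ⟨i, rfl⟩
    exact B_mem i

lemma B_indep : LinearIndependent ℝ B := by
  rw [Fintype.linearIndependent_iff]
  intro g hg i
  have h01 := congrFun (congrFun hg 0) 1
  have h02 := congrFun (congrFun hg 0) 2
  have h03 := congrFun (congrFun hg 0) 3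
  have h12 := congrFun (congrFun hg 1) 2
  have h13 := congrFun (congrFun hg 1) 3
  have h23 := congrFun (congrFun hg 2) 3
  simp [Fin.sum_univ_six, B0, B1, B2, B3, B4, B5, Matrix.vecHead, Matrix.vecTail,
    Matrix.add_apply, Matrix.smul_apply] at h01 h02 h03 h12 h13 h23
  fin_cases i <;> simp_all

lemma finrank_so13 :
    Module.finrank ℝ (so13.toSubmodule : Submodule ℝ (Matrix (Fin 4) (Fin 4) ℝ)) = 6 := by
  rw [so13_eq_span, finrank_span_eq_card B_indep]
  simp

noncomputable def Psi (k : Fin 4 → ℝ) : Matrix (Fin 4) (Fin 4) ℝ →ₗ[ℝ] (Fin 3 → ℝ) where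
  toFun F := ![ F.mulVec k 1 * k 0 - F.mulVec k 0 * k 1,
                F.mulVec k 2 * k 0 - F.mulVec k 0 * k 2,
                F.mulVec k 3 * k 0 - F.mulVec k 0 * k 3 ]
  map_add' F G := by
    funext i
    fin_cases i <;> simp [Matrix.add_mulVec] <;> ring
  map_smul' c F := by
    funext i
    fin_cases i <;> simp [Matrix.smul_mulVec] <;> ring

lemma k0_ne_zero (k : Fin 4 → ℝ) (hk : k ≠ 0) (hnull : eta k k = 0) : k 0 ≠ 0 := by
  intro h0
  apply hk
  have hs : k 1 * k 1 + k 2 * k 2 + k 3 * k 3 = 0 := by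
    rw [eta, h0] at hnull; linarith
  have h1 : k 1 = 0 := by nlinarith [mul_self_nonneg (k 1), mul_self_nonneg (k 2), mul_self_nonneg (k 3)]
  have h2 : k 2 = 0 := by nlinarith [mul_self_nonneg (k 1), mul_self_nonneg (k 2), mul_self_nonneg (k 3)]
  have h3 : k 3 = 0 := by nlinarith [mul_self_nonneg (k 1), mul_self_nonneg (k 2), mul_self_nonneg (k 3)]
  funext i
  fin_cases i <;> assumption

lemma psi_zero_iff (k : Fin 4 → ℝ) (hk0 : k 0 ≠ 0) (F : Matrix (Fin 4) (Fin 4) ℝ) :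
    Psi k F = 0 ↔ F.mulVec k ∈ Submodule.span ℝ ({k} : Set (Fin 4 → ℝ)) := by
  rw [Submodule.mem_span_singleton]
  constructor
  · intro h
    refine ⟨F.mulVec k 0 / k 0, ?_⟩
    have h0 := congrFun h 0
    have h1 := congrFun h 1
    have h2 := congrFun h 2
    simp [Psi] at h0 h1 h2
    funext i
    fin_cases i <;> simp [Pi.smul_apply, smul_eq_mul] <;> field_simp <;> linarith
  · rintro ⟨c, hc⟩
    funext i
    have h1 := congrFun hc 1
    have h2 := congrFun hc 2
    have h3 := congrFun hc 3
    have h0 := congrFun hc 0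
    simp [Pi.smul_apply, smul_eq_mul] at h0 h1 h2 h3
    fin_cases i <;> simp [Psi, ← h0, ← h1, ← h2, ← h3] <;> ring

lemma psi_key (k : Fin 4 → ℝ) (hnull : eta k k = 0) (F : Matrix (Fin 4) (Fin 4) ℝ)
    (hF : F ∈ so13) :
    k 1 * Psi k F 0 + k 2 * Psi k F 1 + k 3 * Psi k F 2 = 0 := by
  obtain ⟨h1,h2,h3,h4,h5,h6,h7,h8,h9,h10⟩ := (mem_so13_iff' F).1 hF
  rw [eta] at hnull
  simp [Psi, Matrix.mulVec, dotProduct, Fin.sum_univ_four, Matrix.cons_val_succ]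
  rw [h1, h2, h3, h4, h5, h6, h7, h8, h9, h10]
  linear_combination (-(F 0 1 * k 1 + F 0 2 * k 2 + F 0 3 * k 3)) * hnull

/-- the functional x ↦ k1 x0 + k2 x1 + k3 x2 on ℝ³ -/
noncomputable def fk (k : Fin 4 → ℝ) : (Fin 3 → ℝ) →ₗ[ℝ] ℝ where
  toFun x := k 1 * x 0 + k 2 * x 1 + k 3 * x 2
  map_add' x y := by simp; ring
  map_smul' c x := by simp; ring

lemma psi_B3 (k : Fin 4 → ℝ) : Psi k (B 3) = ![k 0 * k 2, -(k 0 * k 1), 0] := by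
  funext i
  fin_cases i <;>
    simp [Psi, B3, Matrix.mulVec, dotProduct, Fin.sum_univ_four, Matrix.cons_val_succ, Matrix.vecHead, Matrix.vecTail] <;> ring

lemma psi_B4 (k : Fin 4 → ℝ) : Psi k (B 4) = ![k 0 * k 3, 0, -(k 0 * k 1)] := by
  funext i
  fin_cases i <;>
    simp [Psi, B4, Matrix.mulVec, dotProduct, Fin.sum_univ_four, Matrix.cons_val_succ, Matrix.vecHead, Matrix.vecTail] <;> ring

lemma psi_B5 (k : Fin 4 → ℝ) : Psi k (B 5) = ![0, k 0 * k 3, -(k 0 * k 2)] := by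
  funext i
  fin_cases i <;>
    simp [Psi, B5, Matrix.mulVec, dotProduct, Fin.sum_univ_four, Matrix.cons_val_succ, Matrix.vecHead, Matrix.vecTail] <;> ring

lemma finrank_ker_fk (k : Fin 4 → ℝ) (hk : k ≠ 0) (hnull : eta k k = 0) :
    Module.finrank ℝ (LinearMap.ker (fk k)) = 2 := by
  have hk0 := k0_ne_zero k hk hnull
  have hsq : k 1 * k 1 + k 2 * k 2 + k 3 * k 3 = k 0 * k 0 := by
    rw [eta] at hnull; linarith
  have hsur : LinearMap.range (fk k) = ⊤ := by
    rw [LinearMap.range_eq_top]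
    intro r
    refine ⟨(r / (k 0 * k 0)) • ![k 1, k 2, k 3], ?_⟩
    simp [fk, smul_eq_mul]
    field_simp
    linear_combination r * hsq
  have h := LinearMap.finrank_range_add_finrank_ker (fk k)
  rw [hsur] at h
  simp [finrank_top] at h
  have h3 : Module.finrank ℝ (Fin 3 → ℝ) = 3 := by simp
  omega

lemma two_le_aux (W : Submodule ℝ (Fin 3 → ℝ)) (w1 w2 : Fin 3 → ℝ) (h1 : w1 ∈ W) (h2 : w2 ∈ W)
    (h : LinearIndependent ℝ ![w1, w2]) : 2 ≤ Module.finrank ℝ W := by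
  have hi : LinearIndependent ℝ ![(⟨w1, h1⟩ : W), ⟨w2, h2⟩] := by
    apply LinearIndependent.of_comp W.subtype
    convert h using 1
    funext i
    fin_cases i <;> rfl
  simpa using hi.fintype_card_le_finrank

/-- for a nonzero null vector `k`, the set of members of
`so(1,3)` mapping `k` into its own span is a linear subspace of dimension 4. -/
theorem stmt7 (k : Fin 4 → ℝ) (hk : k ≠ 0) (hnull : eta k k = 0) :
    ∃ S : Submodule ℝ (Matrix (Fin 4) (Fin 4) ℝ),
      (S : Set (Matrix (Fin 4) (Fin 4) ℝ)) =
        {F | F ∈ so13 ∧ F.mulVec k ∈ Submodule.span ℝ ({k} : Set (Fin 4 → ℝ))} ∧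
      Module.finrank ℝ S = 4 := by
  classical
  have hk0 := k0_ne_zero k hk hnull
  set V := (so13.toSubmodule : Submodule ℝ (Matrix (Fin 4) (Fin 4) ℝ)) with hV
  refine ⟨V ⊓ LinearMap.ker (Psi k), ?_, ?_⟩
  · ext F
    simp only [SetLike.mem_coe, Submodule.mem_inf, LinearMap.mem_ker, Set.mem_setOf_eq, hV,
      LieSubalgebra.mem_toSubmodule]
    exact and_congr Iff.rfl (psi_zero_iff k hk0 F)
  · set Φ := (Psi k).domRestrict V with hPhi
    have e1 : (V ⊓ LinearMap.ker (Psi k)).comap V.subtype = LinearMap.ker Φ := by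
      rw [hPhi, LinearMap.ker_domRestrict, Submodule.comap_inf, Submodule.comap_subtype_self,
        top_inf_eq]
    have efr : Module.finrank ℝ
          (V ⊓ LinearMap.ker (Psi k) : Submodule ℝ (Matrix (Fin 4) (Fin 4) ℝ))
        = Module.finrank ℝ (LinearMap.ker Φ) := by
      rw [← e1]
      exact ((Submodule.comapSubtypeEquivOfLe inf_le_left).finrank_eq).symm
    have hrange_le : LinearMap.range Φ ≤ LinearMap.ker (fk k) := by
      rintro x hx
      obtain ⟨⟨F, hF⟩, rfl⟩ := hx
      have hkey := psi_key k hnull F hF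
      simp only [LinearMap.mem_ker, hPhi, LinearMap.domRestrict_apply]
      simpa [fk] using hkey
    have hub : Module.finrank ℝ (LinearMap.range Φ) ≤ 2 := by
      have h := Submodule.finrank_mono hrange_le
      rwa [finrank_ker_fk k hk hnull] at h
    have hmem : ∀ i : Fin 6, Psi k (B i) ∈ LinearMap.range Φ :=
      fun i => ⟨⟨B i, B_mem i⟩, rfl⟩
    have hsp : k 1 ≠ 0 ∨ k 2 ≠ 0 ∨ k 3 ≠ 0 := by
      by_contra h
      push_neg at h
      obtain ⟨h1, h2, h3⟩ := h
      rw [eta, h1, h2, h3] at hnull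
      apply hk0
      have : k 0 * k 0 = 0 := by linarith
      exact mul_self_eq_zero.1 this
    have hlb : 2 ≤ Module.finrank ℝ (LinearMap.range Φ) := by
      rcases hsp with h | h | h
      · refine two_le_aux _ _ _ (hmem 3) (hmem 4) ?_
        rw [psi_B3, psi_B4, LinearIndependent.pair_iff]
        intro s t hst
        have c1 := congrFun hst 1
        have c2 := congrFun hst 2
        simp [Pi.smul_apply, smul_eq_mul] at c1 c2
        constructor
        · rcases c1 with c1 | c1 | c1 <;> first | exact c1 | exact absurd c1 hk0 | exact absurd c1 h
        · rcases c2 with c2 | c2 | c2 <;> first | exact c2 | exact absurd c2 hk0 | exact absurd c2 h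
      · refine two_le_aux _ _ _ (hmem 3) (hmem 5) ?_
        rw [psi_B3, psi_B5, LinearIndependent.pair_iff]
        intro s t hst
        have c1 := congrFun hst 0
        have c2 := congrFun hst 2
        simp [Pi.smul_apply, smul_eq_mul] at c1 c2
        constructor
        · rcases c1 with c1 | c1 | c1 <;> first | exact c1 | exact absurd c1 hk0 | exact absurd c1 h
        · rcases c2 with c2 | c2 | c2 <;> first | exact c2 | exact absurd c2 hk0 | exact absurd c2 h
      · refine two_le_aux _ _ _ (hmem 4) (hmem 5) ?_
        rw [psi_B4, psi_B5, LinearIndependent.pair_iff]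
        intro s t hst
        have c1 := congrFun hst 0
        have c2 := congrFun hst 1
        simp [Pi.smul_apply, smul_eq_mul] at c1 c2
        constructor
        · rcases c1 with c1 | c1 | c1 <;> first | exact c1 | exact absurd c1 hk0 | exact absurd c1 h
        · rcases c2 with c2 | c2 | c2 <;> first | exact c2 | exact absurd c2 hk0 | exact absurd c2 h
    have hr2 : Module.finrank ℝ (LinearMap.range Φ) = 2 := le_antisymm hub hlb
    have h6 := LinearMap.finrank_range_add_finrank_ker Φ
    rw [hr2] at h6
    have hV6 : Module.finrank ℝ V = 6 := finrank_so13
    rw [hV6] at h6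
    rw [efr]
    omega
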